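/- Under the hypotheses that (A,m) is local, J ⊆ Rad(B), J ⊆ f(A), and f(Reg(A)) = Reg(B), if A ⋈^f J is a Prüfer ring then J ⊆ Z(B). -/

import Mathlib

set_option maxHeartbeats 1000000
set_option synthInstance.maxHeartbeats 400000


variable {A B : Type*} [CommRing A] [CommRing B]

/-- The amalgamation `A ⋈^f J` of `A` and `B` along the ideal `J` with respect to `f`,
as a subring of `A × B`. -/
def amalg (f : A →+* B) (J : Ideal B) : Subring (A × B) where
  carrier := {p | ∃ a, ∃ j ∈ J, p = (a, f a + j)}
  zero_mem' := ⟨0, 0, J.zero_mem, by ext <;> simp⟩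
  one_mem' := ⟨1, 0, J.zero_mem, by ext <;> simp⟩
  add_mem' := by
    rintro _ _ ⟨a, j, hj, rfl⟩ ⟨a', j', hj', rfl⟩
    exact ⟨a + a', j + j', J.add_mem hj hj', by simp [Prod.ext_iff]; ring⟩
  neg_mem' := by
    rintro _ ⟨a, j, hj, rfl⟩
    exact ⟨-a, -j, J.neg_mem hj, by simp [Prod.ext_iff]; ring⟩
  mul_mem' := by
    rintro _ _ ⟨a, j, hj, rfl⟩ ⟨a', j', hj', rfl⟩
    exact ⟨a * a', f a * j' + j * f a' + j * j',
      J.add_mem (J.add_mem (J.mul_mem_left _ hj') (J.mul_mem_right _ hj)) (J.mul_mem_right _ hj),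
      by simp [Prod.ext_iff]; ring⟩

/-- The set of zero-divisors of a ring. -/
def zdSet (R : Type*) [CommRing R] : Set R := {a | ∃ b, b ≠ 0 ∧ a * b = 0}

/-- The content ideal of a polynomial: the ideal generated by its coefficients. -/
def contentIdeal {R : Type*} [CommRing R] (p : Polynomial R) : Ideal R :=
  Ideal.span (Set.range p.coeff)

/-- A polynomial is Gaussian if `c(ph) = c(p) c(h)` for every polynomial `h`. -/
def IsGaussianPoly {R : Type*} [CommRing R] (p : Polynomial R) : Prop :=
  ∀ h : Polynomial R, contentIdeal (p * h) = contentIdeal p * contentIdeal h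

/-- A Gaussian ring. -/
def IsGaussianRing (R : Type*) [CommRing R] : Prop :=
  ∀ p q : Polynomial R, contentIdeal (p * q) = contentIdeal p * contentIdeal q

/-- A Prüfer ring: every finitely generated regular ideal is invertible
(in the total ring of quotients). -/
def IsPruferRing (R : Type*) [CommRing R] : Prop :=
  ∀ I : Ideal R, I.FG → (∃ r ∈ I, r ∈ nonZeroDivisors R) →
    ∃ T : FractionalIdeal (nonZeroDivisors R) (FractionRing R),
      (I : FractionalIdeal (nonZeroDivisors R) (FractionRing R)) * T = 1

-- helper: elements of amalg with unit first component (and J ≤ Rad B) are units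
lemma amalg_isUnit (f : A →+* B) (J : Ideal B) (hrad : J ≤ (⊥ : Ideal B).jacobson)
    (r : ↥(amalg f J)) (hu : IsUnit (r : A × B).1) : IsUnit r := by
  obtain ⟨u, l, hl, heq⟩ := r.2
  rw [heq] at hu
  simp only at hu
  -- hu : IsUnit u
  have hfu : IsUnit (f u) := hu.map f
  have hjac := Ideal.mem_jacobson_bot.mp (hrad hl)
  have hd : IsUnit (f u + l) := by
    have h1 : IsUnit (l * ↑hfu.unit⁻¹ + 1) := hjac _
    have h2 : (↑hfu.unit⁻¹ : B) * f u = 1 := hfu.val_inv_mul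
    have : f u + l = (l * ↑hfu.unit⁻¹ + 1) * f u := by linear_combination -l * h2
    rw [this]
    exact h1.mul hfu
  obtain ⟨v, hv⟩ := hu.exists_right_inv
  obtain ⟨w, hw⟩ := hd.exists_right_inv
  have hfv : f u * f v = 1 := by rw [← map_mul, hv, map_one]
  have hmem : (v, w) ∈ amalg f J := by
    refine ⟨v, w - f v, ?_, by simp⟩
    have : w - f v = -(f v * (l * w)) := by linear_combination f v * hw - w * hfv
    rw [this]
    exact J.neg_mem (J.mul_mem_left _ (J.mul_mem_right _ hl))
  rw [isUnit_iff_exists_inv]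
  refine ⟨⟨(v, w), hmem⟩, ?_⟩
  refine Subtype.ext ?_
  simp only [Subring.coe_mul, OneMemClass.coe_one, heq]
  exact Prod.ext (by simpa using hv) (by simpa using hw)

lemma amalg_isLocal (f : A →+* B) (J : Ideal B) [IsLocalRing A]
    (hrad : J ≤ (⊥ : Ideal B).jacobson) : IsLocalRing ↥(amalg f J) := by
  have : Nontrivial ↥(amalg f J) := by
    refine nontrivial_of_ne 0 1 fun hc => ?_
    have : ((0 : ↥(amalg f J)) : A × B).1 = ((1 : ↥(amalg f J)) : A × B).1 := by rw [hc]
    simp at this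
  apply IsLocalRing.of_isUnit_or_isUnit_one_sub_self
  intro r
  rcases IsLocalRing.isUnit_or_isUnit_one_sub_self ((r : A × B).1) with hu | hu
  · exact Or.inl (amalg_isUnit f J hrad r hu)
  · exact Or.inr (amalg_isUnit f J hrad (1 - r) (by simpa using hu))

lemma prufer_local_dvd {R : Type*} [CommRing R] [IsLocalRing R] (h : IsPruferRing R)
    (x y : R) (hxreg : x ∈ nonZeroDivisors R) :
    (∃ r, x * r = y) ∨ (∃ r, y * r = x) := by
  set I : Ideal R := Ideal.span {x, y} with hI
  have hxI : x ∈ I := Ideal.subset_span (by simp)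
  have hyI : y ∈ I := Ideal.subset_span (by simp)
  obtain ⟨T, hT⟩ := h I (hI ▸ Submodule.fg_span ((Set.finite_singleton y).insert x)) ⟨x, hxI, hxreg⟩
  have hsplit : (I : FractionalIdeal (nonZeroDivisors R) (FractionRing R))
      = FractionalIdeal.spanSingleton (nonZeroDivisors R) (algebraMap R (FractionRing R) x)
        + FractionalIdeal.spanSingleton (nonZeroDivisors R) (algebraMap R (FractionRing R) y) := by
    rw [hI, Set.insert_eq x {y}, Ideal.span_union,
      FractionalIdeal.coeIdeal_sup, FractionalIdeal.coeIdeal_span_singleton,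
      FractionalIdeal.coeIdeal_span_singleton]
  have hT2 : FractionalIdeal.spanSingleton (nonZeroDivisors R) (algebraMap R (FractionRing R) x) * T
      + FractionalIdeal.spanSingleton (nonZeroDivisors R) (algebraMap R (FractionRing R) y) * T
      = 1 := by
    rw [← add_mul, ← hsplit, hT]
  obtain ⟨Ix, hIx⟩ := FractionalIdeal.le_one_iff_exists_coeIdeal.mp
    (show FractionalIdeal.spanSingleton (nonZeroDivisors R) (algebraMap R (FractionRing R) x) * T
        ≤ 1 by rw [← hT2, ← FractionalIdeal.sup_eq_add]; exact le_sup_left)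
  obtain ⟨Iy, hIy⟩ := FractionalIdeal.le_one_iff_exists_coeIdeal.mp
    (show FractionalIdeal.spanSingleton (nonZeroDivisors R) (algebraMap R (FractionRing R) y) * T
        ≤ 1 by rw [← hT2, ← FractionalIdeal.sup_eq_add]; exact le_sup_right)
  have htop : Ix ⊔ Iy = ⊤ := by
    apply FractionalIdeal.coeIdeal_injective' (P := FractionRing R) (le_refl (nonZeroDivisors R))
    simp only
    rw [FractionalIdeal.coeIdeal_sup, hIx, hIy, FractionalIdeal.coeIdeal_top, hT2]
  have hcases : Ix = ⊤ ∨ Iy = ⊤ := by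
    by_contra hc
    push_neg at hc
    have hle : Ix ⊔ Iy ≤ IsLocalRing.maximalIdeal R :=
      sup_le (IsLocalRing.le_maximalIdeal hc.1) (IsLocalRing.le_maximalIdeal hc.2)
    rw [htop] at hle
    exact (IsLocalRing.maximalIdeal.isMaximal R).ne_top (top_le_iff.mp hle)
  have key : ∀ z w : R, w ∈ I →
      (1 : FractionRing R) ∈ FractionalIdeal.spanSingleton (nonZeroDivisors R)
        (algebraMap R (FractionRing R) z) * T →
      ∃ r : R, z * r = w := by
    intro z w hwI h1
    obtain ⟨t, htT, hzt⟩ := FractionalIdeal.mem_singleton_mul.mp h1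
    have hwt : algebraMap R (FractionRing R) w * t
        ∈ (1 : FractionalIdeal (nonZeroDivisors R) (FractionRing R)) := by
      rw [← hT]
      exact FractionalIdeal.mul_mem_mul ((FractionalIdeal.mem_coeIdeal _).mpr ⟨w, hwI, rfl⟩) htT
    obtain ⟨r, hr⟩ := (FractionalIdeal.mem_one_iff _).mp hwt
    refine ⟨r, IsFractionRing.injective R (FractionRing R) ?_⟩
    rw [map_mul, hr]
    calc algebraMap R (FractionRing R) z * (algebraMap R (FractionRing R) w * t)
        = algebraMap R (FractionRing R) w * (algebraMap R (FractionRing R) z * t) := by ring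
      _ = algebraMap R (FractionRing R) w := by rw [← hzt, mul_one]
  rcases hcases with hc | hc
  · exact Or.inl (key x y hyI (by
      rw [← hIx, hc]
      exact (FractionalIdeal.mem_coeIdeal _).mpr ⟨1, trivial, map_one _⟩))
  · exact Or.inr (key y x hxI (by
      rw [← hIy, hc]
      exact (FractionalIdeal.mem_coeIdeal _).mpr ⟨1, trivial, map_one _⟩))

/-- If `A ⋈^f J` is Prüfer (under the hypotheses of the main theorem), then `J ⊆ Z(B)`. -/
theorem subset_zeroDivisors_of_amalg_prufer (f : A →+* B) (J : Ideal B) [IsLocalRing A]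
    (hJ : J ≠ ⊤) (hrad : J ≤ (⊥ : Ideal B).jacobson)
    (hJf : (J : Set B) ⊆ Set.range f)
    (hreg : f '' (nonZeroDivisors A : Set A) = (nonZeroDivisors B : Set B))
    (h : IsPruferRing ↥(amalg f J)) :
    (J : Set B) ⊆ zdSet B := by
  intro j hjJ
  by_contra hnz
  have hBnt : Nontrivial B := by
    rcases subsingleton_or_nontrivial B with hs | hs
    · exact absurd (Ideal.eq_top_iff_one J |>.mpr
        (by rw [Subsingleton.elim (1 : B) 0]; exact J.zero_mem)) hJ
    · exact hs
  have hjreg : j ∈ nonZeroDivisors B := by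
    rw [mem_nonZeroDivisors_iff_right]
    intro z hz
    by_contra hz0
    exact hnz ⟨z, hz0, by rw [mul_comm]; exact hz⟩
  obtain ⟨a, haA, hfa⟩ : ∃ a ∈ (nonZeroDivisors A : Set A), f a = j := by
    have hj' : j ∈ (nonZeroDivisors B : Set B) := hjreg
    rw [← hreg] at hj'
    exact hj'
  have hx_mem : ((a, j) : A × B) ∈ amalg f J := ⟨a, 0, J.zero_mem, by simp [hfa]⟩
  have hy_mem : ((0, j) : A × B) ∈ amalg f J := ⟨0, j, hjJ, by simp⟩
  have hxreg : (⟨(a, j), hx_mem⟩ : ↥(amalg f J)) ∈ nonZeroDivisors ↥(amalg f J) := by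
    rw [mem_nonZeroDivisors_iff_right]
    intro z hz
    have hz' : (z : A × B) * (a, j) = 0 := congrArg Subtype.val hz
    have h1 : (z : A × B).1 * a = 0 := congrArg Prod.fst hz'
    have h2 : (z : A × B).2 * j = 0 := congrArg Prod.snd hz'
    exact Subtype.ext (Prod.ext (mem_nonZeroDivisors_iff_right.mp haA _ h1) (mem_nonZeroDivisors_iff_right.mp hjreg _ h2))
  have hloc : IsLocalRing ↥(amalg f J) := amalg_isLocal f J hrad
  rcases prufer_local_dvd h ⟨(a, j), hx_mem⟩ ⟨(0, j), hy_mem⟩ hxreg with ⟨r, hr⟩ | ⟨r, hr⟩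
  · obtain ⟨u, l, hl, hrval⟩ := r.2
    have hval : ((a, j) : A × B) * (r : A × B) = (0, j) := congrArg Subtype.val hr
    rw [hrval] at hval
    have h1 : a * u = 0 := congrArg Prod.fst hval
    have hu0 : u = 0 := mem_nonZeroDivisors_iff_right.mp haA u (by rw [mul_comm]; exact h1)
    have h2 : j * (f u + l) = j := congrArg Prod.snd hval
    rw [hu0, map_zero, zero_add] at h2
    have hlj : (l - 1) * j = 0 := by linear_combination h2
    have hl1 : l - 1 = 0 := mem_nonZeroDivisors_iff_right.mp hjreg _ hlj
    have hl2 : l = 1 := by linear_combination hl1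
    have hone : (1 : B) ∈ J := hl2 ▸ hl
    exact hJ (Ideal.eq_top_iff_one J |>.mpr hone)
  · have hval : ((0, j) : A × B) * (r : A × B) = (a, j) := congrArg Subtype.val hr
    have h1 : (0 : A) * (r : A × B).1 = a := congrArg Prod.fst hval
    have ha0 : a = 0 := by rw [← h1, zero_mul]
    have hj0 : j = 0 := by rw [← hfa, ha0, map_zero]
    have : (1 : B) = 0 := mem_nonZeroDivisors_iff_right.mp hjreg 1 (by rw [hj0, mul_zero])
    exact one_ne_zero this
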